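/- Let Φ = (A; A*; {E_i}; {E*_i}) be a Leonard system in 𝒜 ≅ Mat_{d+1}(K). Then for all 0 ≤ i, j ≤ d: (i) E*_i A^r E*_j = 0 whenever 0 ≤ r < |i−j|; (ii) if i ≤ j then E*_i A^{j−i} E*_j = E*_i A E*_{i+1} A ⋯ E*_{j−1} A E*_j and this element is nonzero; (iii) with r = |i−j|, the element E*_i A^r E*_j is a basis for the one-dimensional K-vector space E*_i 𝒜 E*_j. -/

import Mathlib

open Matrix Polynomial

def IsTridiag {K : Type*} [Field K] {n : ℕ} (M : Matrix (Fin n) (Fin n) K) : Prop :=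
  ∀ i j : Fin n, ((i : ℕ) + 1 < j ∨ (j : ℕ) + 1 < i) → M i j = 0

def IsIrredTridiag {K : Type*} [Field K] {n : ℕ} (M : Matrix (Fin n) (Fin n) K) : Prop :=
  IsTridiag M ∧ ∀ i j : Fin n, ((i : ℕ) + 1 = j ∨ (j : ℕ) + 1 = i) → M i j ≠ 0

/-- Entry of a matrix with natural-number indices; `0` when out of range. -/
def mentry {K : Type*} [Field K] {n : ℕ} (M : Matrix (Fin n) (Fin n) K) (i j : ℕ) : K :=
  if h : i < n ∧ j < n then M ⟨i, h.1⟩ ⟨j, h.2⟩ else 0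

/-- A family indexed by `Fin (d+1)` viewed as indexed by `ℕ`, with value `0` out of range. -/
def natIdx {d : ℕ} {M : Type*} [Zero M] (E : Fin (d+1) → M) (n : ℕ) : M :=
  if h : n < d + 1 then E ⟨n, h⟩ else 0

/-- A Leonard system of diameter `d` in the matrix algebra `Mat_{d+1}(K)`:
`A`, `As` are multiplicity-free with eigenvalues `θ i`, `θs i` and primitive
idempotents `E i`, `Es i`, satisfying the tridiagonal conditions. -/
structure LeonardSystem (K : Type*) [Field K] (d : ℕ) where
  A : Matrix (Fin (d+1)) (Fin (d+1)) K
  As : Matrix (Fin (d+1)) (Fin (d+1)) K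
  E : Fin (d+1) → Matrix (Fin (d+1)) (Fin (d+1)) K
  Es : Fin (d+1) → Matrix (Fin (d+1)) (Fin (d+1)) K
  θ : Fin (d+1) → K
  θs : Fin (d+1) → K
  θ_inj : Function.Injective θ
  θs_inj : Function.Injective θs
  E_ne : ∀ i, E i ≠ 0
  Es_ne : ∀ i, Es i ≠ 0
  E_mul : ∀ i j, E i * E j = if i = j then E i else 0
  Es_mul : ∀ i j, Es i * Es j = if i = j then Es i else 0
  E_sum : ∑ i, E i = 1
  Es_sum : ∑ i, Es i = 1
  A_eq : A = ∑ i, θ i • E i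
  As_eq : As = ∑ i, θs i • Es i
  EAsE_zero : ∀ i j : Fin (d+1), ((i:ℕ) + 1 < j ∨ (j:ℕ) + 1 < i) → E i * As * E j = 0
  EAsE_ne : ∀ i j : Fin (d+1), ((i:ℕ) + 1 = j ∨ (j:ℕ) + 1 = i) → E i * As * E j ≠ 0
  EsAEs_zero : ∀ i j : Fin (d+1), ((i:ℕ) + 1 < j ∨ (j:ℕ) + 1 < i) → Es i * A * Es j = 0
  EsAEs_ne : ∀ i j : Fin (d+1), ((i:ℕ) + 1 = j ∨ (j:ℕ) + 1 = i) → Es i * A * Es j ≠ 0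

/-- A Leonard pair in `Mat_{d+1}(K)`. -/
structure LeonardPair (K : Type*) [Field K] (d : ℕ) where
  A : Matrix (Fin (d+1)) (Fin (d+1)) K
  As : Matrix (Fin (d+1)) (Fin (d+1)) K
  cond1 : ∃ P : Matrix (Fin (d+1)) (Fin (d+1)) K, IsUnit P ∧
    IsIrredTridiag (P⁻¹ * A * P) ∧ (P⁻¹ * As * P).IsDiag
  cond2 : ∃ P : Matrix (Fin (d+1)) (Fin (d+1)) K, IsUnit P ∧
    (P⁻¹ * A * P).IsDiag ∧ IsIrredTridiag (P⁻¹ * As * P)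

section Aux

variable {K : Type*} [Field K] {d : ℕ}

lemma aux_sum_finrank_le {n : ℕ} {V : Type*} [AddCommGroup V] [Module K V]
    [FiniteDimensional K V] (f : Fin n → V →ₗ[K] V)
    (horth : ∀ k l, (f k).comp (f l) = if k = l then f k else 0) :
    ∑ k, Module.finrank K (LinearMap.range (f k)) ≤ Module.finrank K V := by
  classical
  set g : (∀ k, LinearMap.range (f k)) →ₗ[K] V :=
    ∑ k, (LinearMap.range (f k)).subtype ∘ₗ LinearMap.proj k with hg_def
  have hg : Function.Injective g := by
    rw [← LinearMap.ker_eq_bot, LinearMap.ker_eq_bot']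
    intro x hx
    have hx' : ∑ k, (x k : V) = 0 := by
      simpa [hg_def, LinearMap.sum_apply] using hx
    have key : ∀ l, (x l : V) = 0 := by
      intro l
      have h1 : f l (∑ k, (x k : V)) = x l := by
        rw [map_sum, Finset.sum_eq_single l]
        · obtain ⟨y, hy⟩ := (x l).2
          rw [← hy, ← LinearMap.comp_apply, horth l l, if_pos rfl, hy]
        · intro k _ hk
          obtain ⟨y, hy⟩ := (x k).2
          rw [← hy, ← LinearMap.comp_apply, horth l k, if_neg (Ne.symm hk)]
          rfl
        · intro h; exact absurd (Finset.mem_univ _) h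
      rw [hx'] at h1
      simpa using h1.symm
    funext l
    exact Subtype.ext (by simpa using key l)
  have heq : Module.finrank K (∀ k, LinearMap.range (f k))
      = ∑ k, Module.finrank K (LinearMap.range (f k)) :=
    Module.finrank_pi_fintype K
  have hle := LinearMap.finrank_le_finrank_of_injective hg
  omega

lemma LeonardSystem.es_rank_one (L : LeonardSystem K d) (k : Fin (d+1)) :
    ∃ u v : Fin (d+1) → K, u ≠ 0 ∧ v ≠ 0 ∧ L.Es k = Matrix.vecMulVec u v := by
  classical
  set f : Fin (d+1) → ((Fin (d+1) → K) →ₗ[K] (Fin (d+1) → K)) :=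
    fun l => Matrix.mulVecLin (L.Es l) with hf
  have horth : ∀ a b, (f a).comp (f b) = if a = b then f a else 0 := by
    intro a b
    rw [hf]
    dsimp only
    rw [← Matrix.mulVecLin_mul, L.Es_mul]
    split <;> simp
  have hsum := aux_sum_finrank_le f horth
  have hVdim : Module.finrank K (Fin (d+1) → K) = d + 1 := by simp
  have hpos : ∀ l, 1 ≤ Module.finrank K (LinearMap.range (f l)) := by
    intro l
    obtain ⟨a, b, hab⟩ : ∃ a b, L.Es l a b ≠ 0 := by
      by_contra h
      push_neg at h
      exact L.Es_ne l (by ext a b; simpa using h a b)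
    have hne : f l (Pi.single b 1) ≠ 0 := by
      rw [hf]
      dsimp only
      rw [Matrix.mulVecLin_apply, Matrix.mulVec_single_one]
      intro h
      exact hab (by simpa using congrFun h a)
    have hbot : LinearMap.range (f l) ≠ ⊥ := by
      intro h
      exact hne (by rw [LinearMap.range_eq_bot.mp h]; rfl)
    have : Nontrivial ↥(LinearMap.range (f l)) :=
      Submodule.nontrivial_iff_ne_bot.mpr hbot
    exact Module.finrank_pos_iff.mpr this
  have hone : Module.finrank K (LinearMap.range (f k)) = 1 := by
    by_contra hne1
    have h2 : 2 ≤ Module.finrank K (LinearMap.range (f k)) := by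
      have := hpos k; omega
    have hsplit : Module.finrank K (LinearMap.range (f k))
        + ∑ l ∈ Finset.univ.erase k, Module.finrank K (LinearMap.range (f l))
        = ∑ l, Module.finrank K (LinearMap.range (f l)) := by
      simpa using Finset.add_sum_erase Finset.univ
        (fun l => Module.finrank K (LinearMap.range (f l))) (Finset.mem_univ k)
    have hcard : (Finset.univ.erase k).card = d := by
      rw [Finset.card_erase_of_mem (Finset.mem_univ k)]
      simp
    have hlow : (Finset.univ.erase k).card
        ≤ ∑ l ∈ Finset.univ.erase k, Module.finrank K (LinearMap.range (f l)) := by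
      calc (Finset.univ.erase k).card = ∑ _l ∈ Finset.univ.erase k, 1 := by simp
        _ ≤ _ := Finset.sum_le_sum (fun l _ => hpos l)
    omega
  obtain ⟨v₀, hv₀, hspan⟩ := finrank_eq_one_iff'.mp hone
  set u : Fin (d+1) → K := (v₀ : Fin (d+1) → K) with hu
  have hu0 : u ≠ 0 := by
    intro h
    apply hv₀
    apply Subtype.ext
    rw [hu] at h
    simpa using h
  have hcol : ∀ b, ∃ c : K, ∀ a, c * u a = L.Es k a b := by
    intro b
    have hmem : L.Es k *ᵥ Pi.single b 1 ∈ LinearMap.range (f k) :=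
      ⟨Pi.single b 1, rfl⟩
    obtain ⟨c, hc⟩ := hspan ⟨_, hmem⟩
    refine ⟨c, fun a => ?_⟩
    have := congrFun (congrArg Subtype.val hc) a
    simpa [Matrix.mulVec_single_one] using this
  choose v hv using hcol
  refine ⟨u, v, hu0, ?_, ?_⟩
  · intro hv0
    apply L.Es_ne k
    ext a b
    rw [Matrix.zero_apply, ← hv b a, hv0]
    simp
  · ext a b
    rw [Matrix.vecMulVec_apply, mul_comm, hv b a]

lemma mul_vecMulVec' {n : ℕ} (X : Matrix (Fin n) (Fin n) K) (u v : Fin n → K) :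
    X * Matrix.vecMulVec u v = Matrix.vecMulVec (X *ᵥ u) v := by
  ext a b
  simp only [Matrix.mul_apply, Matrix.vecMulVec_apply, Matrix.mulVec, dotProduct,
    Finset.sum_mul]
  exact Finset.sum_congr rfl (fun c _ => by ring)

lemma vecMulVec_mul' {n : ℕ} (u v : Fin n → K) (Y : Matrix (Fin n) (Fin n) K) :
    Matrix.vecMulVec u v * Y = Matrix.vecMulVec u (v ᵥ* Y) := by
  ext a b
  simp only [Matrix.mul_apply, Matrix.vecMulVec_apply, Matrix.vecMul, dotProduct,
    Finset.mul_sum]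
  exact Finset.sum_congr rfl (fun c _ => by ring)

lemma vecMulVec_eq_zero_iff {n : ℕ} {u v : Fin n → K} :
    Matrix.vecMulVec u v = 0 ↔ u = 0 ∨ v = 0 := by
  constructor
  · intro h
    by_contra hc
    push_neg at hc
    obtain ⟨h1, h2⟩ := hc
    obtain ⟨a, ha⟩ := Function.ne_iff.mp h1
    obtain ⟨b, hb⟩ := Function.ne_iff.mp h2
    have h3 := congrFun (congrFun h a) b
    rw [Matrix.vecMulVec_apply, Matrix.zero_apply] at h3
    rcases mul_eq_zero.mp h3 with h4 | h4
    · exact ha (by simpa using h4)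
    · exact hb (by simpa using h4)
  · rintro (h | h) <;> subst h <;> ext a b <;> simp [Matrix.vecMulVec_apply]

lemma vecMulVec_mul_vecMulVec {n : ℕ} (p q u v : Fin n → K) :
    Matrix.vecMulVec p q * Matrix.vecMulVec u v
      = (q ⬝ᵥ u) • Matrix.vecMulVec p v := by
  ext a b
  simp only [Matrix.mul_apply, Matrix.vecMulVec_apply, Matrix.smul_apply,
    dotProduct, smul_eq_mul, Finset.sum_mul]
  exact Finset.sum_congr rfl (fun c _ => by ring)

lemma LeonardSystem.sandwich_ne (L : LeonardSystem K d) (k : Fin (d+1))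
    (X Y : Matrix (Fin (d+1)) (Fin (d+1)) K)
    (hX : X * L.Es k ≠ 0) (hY : L.Es k * Y ≠ 0) : X * L.Es k * Y ≠ 0 := by
  obtain ⟨u, v, hu, hv, he⟩ := L.es_rank_one k
  rw [he] at hX hY ⊢
  rw [mul_vecMulVec'] at hX ⊢
  rw [vecMulVec_mul'] at hY ⊢
  intro h
  rcases vecMulVec_eq_zero_iff.mp h with h | h
  · exact hX (vecMulVec_eq_zero_iff.mpr (Or.inl h))
  · exact hY (vecMulVec_eq_zero_iff.mpr (Or.inr h))

lemma LeonardSystem.sandwich_propto (L : LeonardSystem K d) (i j : Fin (d+1)) :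
    ∃ W : Matrix (Fin (d+1)) (Fin (d+1)) K,
      ∀ X : Matrix (Fin (d+1)) (Fin (d+1)) K, ∃ c : K,
        L.Es i * X * L.Es j = c • W := by
  obtain ⟨u1, v1, _, _, h1⟩ := L.es_rank_one i
  obtain ⟨u2, v2, _, _, h2⟩ := L.es_rank_one j
  refine ⟨Matrix.vecMulVec u1 v2, fun X => ⟨(v1 ᵥ* X) ⬝ᵥ u2, ?_⟩⟩
  rw [h1, h2, vecMulVec_mul', _root_.vecMulVec_mul_vecMulVec]

lemma LeonardSystem.expand (L : LeonardSystem K d) (r : ℕ) (i j : Fin (d+1)) :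
    L.Es i * L.A ^ (r+1) * L.Es j
      = ∑ k, (L.Es i * L.A ^ r * L.Es k) * (L.Es k * L.A * L.Es j) := by
  have h1 : L.Es i * L.A ^ (r+1) * L.Es j
      = (L.Es i * L.A ^ r) * ((∑ k, L.Es k) * (L.A * L.Es j)) := by
    rw [L.Es_sum, pow_succ]
    noncomm_ring
  rw [h1, Finset.sum_mul, Finset.mul_sum]
  refine Finset.sum_congr rfl (fun k _ => ?_)
  have hk : L.Es k = L.Es k * L.Es k := by rw [L.Es_mul, if_pos rfl]
  calc (L.Es i * L.A ^ r) * (L.Es k * (L.A * L.Es j))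
      = (L.Es i * L.A ^ r) * ((L.Es k * L.Es k) * (L.A * L.Es j)) := by rw [← hk]
    _ = (L.Es i * L.A ^ r * L.Es k) * (L.Es k * L.A * L.Es j) := by noncomm_ring

lemma LeonardSystem.pow_zero_of_lt (L : LeonardSystem K d) :
    ∀ r : ℕ, ∀ i j : Fin (d+1), r < (((i:ℕ):ℤ) - ((j:ℕ):ℤ)).natAbs →
      L.Es i * L.A ^ r * L.Es j = 0 := by
  intro r
  induction r with
  | zero =>
    intro i j hr
    have hij : i ≠ j := by
      intro h
      subst h
      omega
    rw [pow_zero, mul_one, L.Es_mul, if_neg hij]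
  | succ r ih =>
    intro i j hr
    rw [L.expand r i j]
    apply Finset.sum_eq_zero
    intro k _
    by_cases hk : ((k:ℕ) + 1 < (j:ℕ) ∨ (j:ℕ) + 1 < (k:ℕ))
    · rw [L.EsAEs_zero k j hk, mul_zero]
    · rw [ih i k (by omega), zero_mul]

lemma LeonardSystem.part2 (L : LeonardSystem K d) :
    ∀ g : ℕ, ∀ i j : Fin (d+1), (i:ℕ) + g = (j:ℕ) →
      (L.Es i * L.A ^ g * L.Es j =
        (((List.range g).map (fun t => natIdx L.Es ((i:ℕ) + t) * L.A)).prod) * L.Es j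
      ∧ L.Es i * L.A ^ g * L.Es j ≠ 0) := by
  intro g
  induction g with
  | zero =>
    intro i j hij
    have hij' : i = j := Fin.ext (by omega)
    subst hij'
    rw [pow_zero, mul_one, L.Es_mul, if_pos rfl]
    exact ⟨by simp, L.Es_ne i⟩
  | succ g ih =>
    intro i j hij
    have hjlt : (i:ℕ) + g < d + 1 := by omega
    set j' : Fin (d+1) := ⟨(i:ℕ) + g, hjlt⟩ with hj'def
    have hj'val : (j' : ℕ) = (i:ℕ) + g := rfl
    obtain ⟨ihEq, ihNe⟩ := ih i j' rfl
    have hidem : L.Es j' * L.Es j' = L.Es j' := by rw [L.Es_mul, if_pos rfl]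
    have hsingle : L.Es i * L.A ^ (g+1) * L.Es j
        = (L.Es i * L.A ^ g * L.Es j') * (L.Es j' * L.A * L.Es j) := by
      rw [L.expand g i j]
      apply Finset.sum_eq_single
      · intro k _ hk
        by_cases hk2 : ((k:ℕ) + 1 < (j:ℕ) ∨ (j:ℕ) + 1 < (k:ℕ))
        · rw [L.EsAEs_zero k j hk2, mul_zero]
        · have hkv : (k:ℕ) ≠ (i:ℕ) + g := by
            intro h
            exact hk (Fin.ext (by omega))
          rw [L.pow_zero_of_lt g i k (by omega), zero_mul]
      · intro h
        exact absurd (Finset.mem_univ _) h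
    constructor
    · rw [hsingle, ihEq]
      set P : Matrix (Fin (d+1)) (Fin (d+1)) K :=
        ((List.range g).map (fun t => natIdx L.Es ((i:ℕ) + t) * L.A)).prod with hP
      have hrange : ((List.range (g+1)).map
            (fun t => natIdx L.Es ((i:ℕ) + t) * L.A)).prod
          = P * (natIdx L.Es ((i:ℕ) + g) * L.A) := by
        rw [List.range_succ, List.map_append, List.prod_append]
        simp [hP]
      have hnat : natIdx L.Es ((i:ℕ) + g) = L.Es j' := by
        rw [natIdx, dif_pos hjlt]
      rw [hrange, hnat]
      calc (P * L.Es j') * (L.Es j' * L.A * L.Es j)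
          = P * ((L.Es j' * L.Es j') * L.A * L.Es j) := by noncomm_ring
        _ = P * (L.Es j' * L.A * L.Es j) := by rw [hidem]
        _ = P * (L.Es j' * L.A) * L.Es j := by noncomm_ring
    · rw [hsingle]
      have hX : (L.Es i * L.A ^ g) * L.Es j' ≠ 0 := ihNe
      have hY : L.Es j' * (L.A * L.Es j) ≠ 0 := by
        have h := L.EsAEs_ne j' j (Or.inl (by omega))
        rw [mul_assoc] at h
        exact h
      have hkey := L.sandwich_ne j' (L.Es i * L.A ^ g) (L.A * L.Es j) hX hY
      have hG : (L.Es i * L.A ^ g * L.Es j') * (L.Es j' * L.A * L.Es j)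
          = (L.Es i * L.A ^ g) * L.Es j' * (L.A * L.Es j) := by
        calc (L.Es i * L.A ^ g * L.Es j') * (L.Es j' * L.A * L.Es j)
            = L.Es i * L.A ^ g * ((L.Es j' * L.Es j') * L.A * L.Es j) := by noncomm_ring
          _ = L.Es i * L.A ^ g * (L.Es j' * L.A * L.Es j) := by rw [hidem]
          _ = (L.Es i * L.A ^ g) * L.Es j' * (L.A * L.Es j) := by noncomm_ring
      rw [hG]
      exact hkey

def LeonardSystem.transpose (L : LeonardSystem K d) : LeonardSystem K d where
  A := L.Aᵀ
  As := L.Asᵀ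
  E := fun i => (L.E i)ᵀ
  Es := fun i => (L.Es i)ᵀ
  θ := L.θ
  θs := L.θs
  θ_inj := L.θ_inj
  θs_inj := L.θs_inj
  E_ne := fun i h => L.E_ne i (Matrix.transpose_eq_zero.mp h)
  Es_ne := fun i h => L.Es_ne i (Matrix.transpose_eq_zero.mp h)
  E_mul := fun i j => by
    rw [← Matrix.transpose_mul, L.E_mul j i]
    by_cases h : i = j
    · subst h; simp
    · rw [if_neg (Ne.symm h), if_neg h, Matrix.transpose_zero]
  Es_mul := fun i j => by
    rw [← Matrix.transpose_mul, L.Es_mul j i]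
    by_cases h : i = j
    · subst h; simp
    · rw [if_neg (Ne.symm h), if_neg h, Matrix.transpose_zero]
  E_sum := by rw [← Matrix.transpose_sum, L.E_sum, Matrix.transpose_one]
  Es_sum := by rw [← Matrix.transpose_sum, L.Es_sum, Matrix.transpose_one]
  A_eq := by
    rw [L.A_eq, Matrix.transpose_sum]
    exact Finset.sum_congr rfl (fun k _ => by rw [Matrix.transpose_smul])
  As_eq := by
    rw [L.As_eq, Matrix.transpose_sum]
    exact Finset.sum_congr rfl (fun k _ => by rw [Matrix.transpose_smul])
  EAsE_zero := fun i j h => by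
    have h2 := L.EAsE_zero j i h.symm
    have h3 : (L.E i)ᵀ * L.Asᵀ * (L.E j)ᵀ = (L.E j * L.As * L.E i)ᵀ := by
      rw [Matrix.transpose_mul, Matrix.transpose_mul]
      noncomm_ring
    rw [h3, h2, Matrix.transpose_zero]
  EAsE_ne := fun i j h => by
    have h2 := L.EAsE_ne j i h.symm
    have h3 : (L.E i)ᵀ * L.Asᵀ * (L.E j)ᵀ = (L.E j * L.As * L.E i)ᵀ := by
      rw [Matrix.transpose_mul, Matrix.transpose_mul]
      noncomm_ring
    rw [h3]
    exact fun h4 => h2 (Matrix.transpose_eq_zero.mp h4)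
  EsAEs_zero := fun i j h => by
    have h2 := L.EsAEs_zero j i h.symm
    have h3 : (L.Es i)ᵀ * L.Aᵀ * (L.Es j)ᵀ = (L.Es j * L.A * L.Es i)ᵀ := by
      rw [Matrix.transpose_mul, Matrix.transpose_mul]
      noncomm_ring
    rw [h3, h2, Matrix.transpose_zero]
  EsAEs_ne := fun i j h => by
    have h2 := L.EsAEs_ne j i h.symm
    have h3 : (L.Es i)ᵀ * L.Aᵀ * (L.Es j)ᵀ = (L.Es j * L.A * L.Es i)ᵀ := by
      rw [Matrix.transpose_mul, Matrix.transpose_mul]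
      noncomm_ring
    rw [h3]
    exact fun h4 => h2 (Matrix.transpose_eq_zero.mp h4)

lemma LeonardSystem.powAbs_ne (L : LeonardSystem K d) (i j : Fin (d+1)) :
    L.Es i * L.A ^ (((i:ℕ):ℤ) - ((j:ℕ):ℤ)).natAbs * L.Es j ≠ 0 := by
  rcases le_or_gt (i:ℕ) (j:ℕ) with h | h
  · have hr : (((i:ℕ):ℤ) - ((j:ℕ):ℤ)).natAbs = (j:ℕ) - (i:ℕ) := by omega
    rw [hr]
    exact (L.part2 _ i j (by omega)).2
  · have hr : (((i:ℕ):ℤ) - ((j:ℕ):ℤ)).natAbs = (i:ℕ) - (j:ℕ) := by omega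
    rw [hr]
    have hT := (L.transpose.part2 ((i:ℕ) - (j:ℕ)) j i (by omega)).2
    intro h0
    apply hT
    show (L.Es j)ᵀ * (L.Aᵀ) ^ ((i:ℕ) - (j:ℕ)) * (L.Es i)ᵀ = 0
    rw [← Matrix.transpose_pow]
    have h3 : (L.Es j)ᵀ * (L.A ^ ((i:ℕ) - (j:ℕ)))ᵀ * (L.Es i)ᵀ
        = (L.Es i * L.A ^ ((i:ℕ) - (j:ℕ)) * L.Es j)ᵀ := by
      rw [Matrix.transpose_mul, Matrix.transpose_mul]
      noncomm_ring
    rw [h3, h0, Matrix.transpose_zero]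

end Aux

theorem stmt6 {K : Type*} [Field K] {d : ℕ} (L : LeonardSystem K d) :
    (∀ i j : Fin (d+1), ∀ r : ℕ, (r : ℤ) < |((i:ℕ):ℤ) - ((j:ℕ):ℤ)| →
      L.Es i * L.A ^ r * L.Es j = 0) ∧
    (∀ i j : Fin (d+1), (i:ℕ) ≤ (j:ℕ) →
      L.Es i * L.A ^ ((j:ℕ) - (i:ℕ)) * L.Es j =
        (((List.range ((j:ℕ) - (i:ℕ))).map
          (fun t => natIdx L.Es ((i:ℕ) + t) * L.A)).prod) * L.Es j ∧
      L.Es i * L.A ^ ((j:ℕ) - (i:ℕ)) * L.Es j ≠ 0) ∧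
    (∀ i j : Fin (d+1),
      L.Es i * L.A ^ (((i:ℕ):ℤ) - ((j:ℕ):ℤ)).natAbs * L.Es j ≠ 0 ∧
      ∀ X : Matrix (Fin (d+1)) (Fin (d+1)) K, ∃ c : K,
        L.Es i * X * L.Es j = c • (L.Es i * L.A ^ (((i:ℕ):ℤ) - ((j:ℕ):ℤ)).natAbs * L.Es j)) := by
  refine ⟨?_, ?_, ?_⟩
  · intro i j r hr
    apply L.pow_zero_of_lt
    rw [Int.abs_eq_natAbs] at hr
    omega
  · intro i j hij
    exact L.part2 _ i j (by omega)
  · intro i j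
    refine ⟨L.powAbs_ne i j, ?_⟩
    intro X
    obtain ⟨W, hW⟩ := L.sandwich_propto i j
    obtain ⟨c0, hc0⟩ := hW (L.A ^ (((i:ℕ):ℤ) - ((j:ℕ):ℤ)).natAbs)
    have hc0ne : c0 ≠ 0 := by
      intro h
      apply L.powAbs_ne i j
      rw [hc0, h, zero_smul]
    obtain ⟨c, hc⟩ := hW X
    refine ⟨c / c0, ?_⟩
    rw [hc, hc0, smul_smul, div_mul_cancel₀ c hc0ne]
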